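/- Let G = (V, E) be a graph of order n and let G_P be the GP_5-graph of G, obtained by attaching to each vertex v_i of G a path on five new vertices v_i^0 v_i^1 v_i^2 v_i^3 v_i^4 via the edge v_i v_i^2. Then for any integer k ≤ n, G has a dominating set of cardinality at most k if and only if G_P has a dominating set of cardinality at most k + 2n. -/

import Mathlib

def IsDominatingSet {V : Type*} (G : SimpleGraph V) (D : Set V) : Prop :=
  ∀ v ∉ D, ∃ u ∈ D, G.Adj u v

noncomputable def domNum {V : Type*} [Fintype V] (G : SimpleGraph V) : ℕ :=
  sInf {n | ∃ D : Finset V, IsDominatingSet G ↑D ∧ D.card = n}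

def IsIndepSet {V : Type*} (G : SimpleGraph V) (s : Set V) : Prop :=
  s.Pairwise fun a b => ¬ G.Adj a b
def GP5 {V : Type*} (G : SimpleGraph V) : SimpleGraph (V ⊕ V × Fin 5) :=
  SimpleGraph.fromRel (fun a b =>
    (∃ u v : V, a = Sum.inl u ∧ b = Sum.inl v ∧ G.Adj u v) ∨
    (∃ v : V, ∃ i : Fin 4, a = Sum.inr (v, i.castSucc) ∧ b = Sum.inr (v, i.succ)) ∨
    (∃ v : V, a = Sum.inl v ∧ b = Sum.inr (v, 2)))

lemma adj_inr0 {V : Type*} {G : SimpleGraph V} {v : V} {u : V ⊕ V × Fin 5}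
    (h : (GP5 G).Adj u (Sum.inr (v, 0))) : u = Sum.inr (v, 1) := by
  rw [GP5, SimpleGraph.fromRel_adj] at h
  obtain ⟨hne, h | h⟩ := h <;>
    rcases h with ⟨a, b, h1, h2, h3⟩ | ⟨w, j, h1, h2⟩ | ⟨w, h1, h2⟩ <;>
    simp_all [Fin.ext_iff, fun j : Fin 4 => (Fin.succ_ne_zero j).symm] <;> omega

lemma adj_inr4 {V : Type*} {G : SimpleGraph V} {v : V} {u : V ⊕ V × Fin 5}
    (h : (GP5 G).Adj u (Sum.inr (v, 4))) : u = Sum.inr (v, 3) := by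
  rw [GP5, SimpleGraph.fromRel_adj] at h
  obtain ⟨hne, h | h⟩ := h <;>
    rcases h with ⟨a, b, h1, h2, h3⟩ | ⟨w, j, h1, h2⟩ | ⟨w, h1, h2⟩ <;>
    simp_all [Fin.ext_iff] <;> omega

lemma adj_inl {V : Type*} {G : SimpleGraph V} {v : V} {u : V ⊕ V × Fin 5}
    (h : (GP5 G).Adj u (Sum.inl v)) :
    (∃ w, u = Sum.inl w ∧ G.Adj w v) ∨ u = Sum.inr (v, 2) := by
  rw [GP5, SimpleGraph.fromRel_adj] at h
  obtain ⟨hne, h | h⟩ := h <;>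
    rcases h with ⟨a, b, h1, h2, h3⟩ | ⟨w, j, h1, h2⟩ | ⟨w, h1, h2⟩ <;>
    simp_all [Fin.ext_iff, G.adj_comm]

lemma stmt8_fwd {V : Type*} [Fintype V] [DecidableEq V] (G : SimpleGraph V)
    (k : ℕ) (D : Finset V) (hD : IsDominatingSet G ↑D) (hcard : D.card ≤ k) :
    (∃ D' : Finset (V ⊕ V × Fin 5), IsDominatingSet (GP5 G) ↑D' ∧
        D'.card ≤ k + 2 * Fintype.card V) := by
  classical
  refine ⟨D.image Sum.inl ∪ Finset.univ.image (fun v => Sum.inr (v, (1:Fin 5)))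
      ∪ Finset.univ.image (fun v => Sum.inr (v, (3:Fin 5))), ?_, ?_⟩
  · rintro (v | ⟨v, i⟩) hx
    · have hv : v ∉ D := by
        intro h; exact hx (by simp [h])
      obtain ⟨u, hu, hadj⟩ := hD v hv
      exact ⟨Sum.inl u, by simp [Finset.mem_coe.mp hu], by
        rw [GP5, SimpleGraph.fromRel_adj]
        exact ⟨by simpa using hadj.ne, Or.inl (Or.inl ⟨u, v, rfl, rfl, hadj⟩)⟩⟩
    · fin_cases i
      · refine ⟨Sum.inr (v, 1), by simp, ?_⟩
        rw [GP5, SimpleGraph.fromRel_adj]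
        exact ⟨by simp, Or.inr (Or.inr (Or.inl ⟨v, 0, rfl, rfl⟩))⟩
      · exact absurd (by simp : (Sum.inr (v, 1) : V ⊕ V × Fin 5) ∈ _) hx
      · refine ⟨Sum.inr (v, 1), by simp, ?_⟩
        rw [GP5, SimpleGraph.fromRel_adj]
        exact ⟨by simp, Or.inl (Or.inr (Or.inl ⟨v, 1, rfl, rfl⟩))⟩
      · exact absurd (by simp : (Sum.inr (v, 3) : V ⊕ V × Fin 5) ∈ _) hx
      · refine ⟨Sum.inr (v, 3), by simp, ?_⟩
        rw [GP5, SimpleGraph.fromRel_adj]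
        exact ⟨by simp, Or.inl (Or.inr (Or.inl ⟨v, 3, rfl, rfl⟩))⟩
  · calc _ ≤ (D.image Sum.inl ∪ Finset.univ.image (fun v => Sum.inr (v, (1:Fin 5)))).card
          + (Finset.univ.image (fun v : V => Sum.inr (v, (3:Fin 5)))).card := Finset.card_union_le _ _
      _ ≤ (D.image Sum.inl).card + (Finset.univ.image (fun v : V => Sum.inr (v, (1:Fin 5)))).card
          + (Finset.univ.image (fun v : V => Sum.inr (v, (3:Fin 5)))).card := by
            gcongr; exact Finset.card_union_le _ _
      _ ≤ k + Fintype.card V + Fintype.card V := by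
            gcongr
            · exact (Finset.card_image_le).trans hcard
            · simpa using (Finset.card_image_le (s := (Finset.univ : Finset V)))
            · simpa using (Finset.card_image_le (s := (Finset.univ : Finset V)))
      _ = k + 2 * Fintype.card V := by ring

lemma stmt8_bwd {V : Type*} [Fintype V] [DecidableEq V] (G : SimpleGraph V)
    (k : ℕ) (D' : Finset (V ⊕ V × Fin 5)) (hD' : IsDominatingSet (GP5 G) ↑D')
    (hcard : D'.card ≤ k + 2 * Fintype.card V) :
    ∃ D : Finset V, IsDominatingSet G ↑D ∧ D.card ≤ k := by
  classical
  set T : V → Finset (V ⊕ V × Fin 5) :=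
    fun v => D'.filter (fun x => ∃ i : Fin 5, x = Sum.inr (v, i)) with hT
  -- each tail has an element with index in {0,1} and one in {3,4}
  have hlow : ∀ v : V, ∃ a ∈ T v, a = Sum.inr (v, 0) ∨ a = Sum.inr (v, 1) := by
    intro v
    by_cases h0 : Sum.inr (v, (0:Fin 5)) ∈ D'
    · exact ⟨_, by simp [hT, h0], Or.inl rfl⟩
    · obtain ⟨u, hu, hadj⟩ := hD' _ (by simpa using h0)
      have := adj_inr0 hadj
      subst this
      exact ⟨_, by simp [hT, Finset.mem_coe.mp hu], Or.inr rfl⟩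
  have hhigh : ∀ v : V, ∃ a ∈ T v, a = Sum.inr (v, 3) ∨ a = Sum.inr (v, 4) := by
    intro v
    by_cases h0 : Sum.inr (v, (4:Fin 5)) ∈ D'
    · exact ⟨_, by simp [hT, h0], Or.inr rfl⟩
    · obtain ⟨u, hu, hadj⟩ := hD' _ (by simpa using h0)
      have := adj_inr4 hadj
      subst this
      exact ⟨_, by simp [hT, Finset.mem_coe.mp hu], Or.inl rfl⟩
  have hT2 : ∀ v : V, 2 ≤ (T v).card := by
    intro v
    obtain ⟨a, ha, haeq⟩ := hlow v
    obtain ⟨b, hb, hbeq⟩ := hhigh v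
    have hne : a ≠ b := by
      rcases haeq with rfl | rfl <;> rcases hbeq with rfl | rfl <;> simp
    exact Finset.one_lt_card.mpr ⟨a, ha, b, hb, hne⟩
  set D : Finset V :=
    Finset.univ.filter (fun v => Sum.inl v ∈ D' ∨ 3 ≤ (T v).card) with hDdef
  have hTm2 : ∀ v : V, Sum.inr (v, (2:Fin 5)) ∈ D' → 3 ≤ (T v).card := by
    intro v h2
    obtain ⟨a, ha, haeq⟩ := hlow v
    obtain ⟨b, hb, hbeq⟩ := hhigh v
    refine Finset.two_lt_card.mpr ⟨a, ha, b, hb, Sum.inr (v, 2), by simp [hT, h2], ?_, ?_, ?_⟩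
    · rcases haeq with rfl | rfl <;> rcases hbeq with rfl | rfl <;> simp
    · rcases haeq with rfl | rfl <;> simp
    · rcases hbeq with rfl | rfl <;> simp
  refine ⟨D, ?_, ?_⟩
  · intro v hv
    simp only [hDdef, Finset.coe_filter, Set.mem_setOf_eq, Finset.mem_univ, true_and,
      not_or, not_le] at hv
    obtain ⟨hv1, hv2⟩ := hv
    obtain ⟨u, hu, hadj⟩ := hD' _ (by simpa using hv1)
    rcases adj_inl hadj with ⟨w, rfl, hw⟩ | rfl
    · exact ⟨w, by simp [hDdef, Or.inl (Finset.mem_coe.mp hu)], hw⟩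
    · exact absurd (hTm2 v (Finset.mem_coe.mp hu)) (by omega)
  · -- cardinality
    have hsplit : D'.card = (D'.filter (fun x => x.isLeft)).card
        + ∑ v : V, (T v).card := by
      have hdisj : ((Finset.univ : Finset V) : Set V).PairwiseDisjoint T := by
        intro a _ b _ hab
        simp only [Finset.disjoint_left, hT, Finset.mem_filter]
        rintro x ⟨-, i, rfl⟩ ⟨-, j, hj⟩
        simp only [Sum.inr.injEq, Prod.mk.injEq] at hj
        exact hab hj.1
      have hunion : D'.filter (fun x => ¬ x.isLeft) = Finset.univ.biUnion T := by
        ext x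
        cases x with
        | inl w => simp [hT]
        | inr p => simp [hT]; rintro - ; exact ⟨p.1, p.2, rfl⟩
      rw [← Finset.card_filter_add_card_filter_not (p := fun x => x.isLeft),
        hunion, Finset.card_biUnion (by exact fun a ha b hb h => hdisj (by simp) (by simp) h)]
    have hA : (Finset.univ.filter (fun v => Sum.inl v ∈ D')).card
        ≤ (D'.filter (fun x => x.isLeft)).card := by
      apply Finset.card_le_card_of_injOn (fun v => Sum.inl v)
      · intro v hv; simp only [Finset.mem_coe, Finset.mem_filter, Finset.mem_univ, true_and] at hv
        simp [hv]
      · intro a _ b _ h; simpa using h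
    have hB : (Finset.univ.filter (fun v => 3 ≤ (T v).card)).card + 2 * Fintype.card V
        ≤ ∑ v : V, (T v).card := by
      have : ∀ v : V, (if 3 ≤ (T v).card then 1 else 0) + 2 ≤ (T v).card := by
        intro v; have h2 := hT2 v; split <;> omega
      calc (Finset.univ.filter (fun v => 3 ≤ (T v).card)).card + 2 * Fintype.card V
          = ∑ v : V, ((if 3 ≤ (T v).card then 1 else 0) + 2) := by
            rw [Finset.sum_add_distrib, Finset.sum_const, Finset.card_univ,
              smul_eq_mul, Finset.card_filter]
            ring
        _ ≤ ∑ v : V, (T v).card := Finset.sum_le_sum fun v _ => this v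
    have hDcard : D.card + 2 * Fintype.card V ≤ D'.card := by
      have : D ⊆ Finset.univ.filter (fun v => Sum.inl v ∈ D')
          ∪ Finset.univ.filter (fun v => 3 ≤ (T v).card) := by
        rw [hDdef, ← Finset.filter_or]
      calc D.card + 2 * Fintype.card V
          ≤ ((Finset.univ.filter (fun v => Sum.inl v ∈ D')).card
            + (Finset.univ.filter (fun v => 3 ≤ (T v).card)).card) + 2 * Fintype.card V := by
            gcongr
            exact (Finset.card_le_card this).trans (Finset.card_union_le _ _)
        _ ≤ (D'.filter (fun x => x.isLeft)).card + ∑ v : V, (T v).card := by omega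
        _ = D'.card := hsplit.symm
    omega

/-- G has a dominating set of size ≤ k iff its GP_5-graph has one of size ≤ k + 2n. -/
theorem stmt_8 {V : Type*} [Fintype V] [DecidableEq V] (G : SimpleGraph V)
    (k : ℕ) (hk : k ≤ Fintype.card V) :
    (∃ D : Finset V, IsDominatingSet G ↑D ∧ D.card ≤ k) ↔
      (∃ D' : Finset (V ⊕ V × Fin 5), IsDominatingSet (GP5 G) ↑D' ∧
        D'.card ≤ k + 2 * Fintype.card V) := by
  constructor
  · rintro ⟨D, hD, hc⟩; exact stmt8_fwd G k D hD hc
  · rintro ⟨D', hD', hc⟩; exact stmt8_bwd G k D' hD' hc
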